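/- Let m ≥ 1 and δ > 0, let H be a linear subspace of ℝ^m with orthogonal projection P_H, and let v ∈ ℝ^m. Set v_H = P_H v, and define C(H,v) = P_H − (1 − e^{−‖v_H‖²/(2δ²)}) · (v_H/‖v_H‖) ⊗ (v_H/‖v_H‖) when v_H ≠ 0, and C(H,v) = P_H when v_H = 0. Then: (1) 0 ⪯ C(H,v) ⪯ P_H and the image of C(H,v) is contained in H; (2) Tr(C(H,v)) ≥ dim(H) − 1; (3) ‖C(H,v) v‖ ≤ δ. -/

import Mathlib

noncomputable section

open scoped RealInnerProductSpace

/-- The orthogonal projection onto a subspace `H`, as a continuous linear map on the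
ambient space. -/
def projCLM {m : ℕ} (H : Submodule ℝ (EuclideanSpace ℝ (Fin m))) :
    EuclideanSpace ℝ (Fin m) →L[ℝ] EuclideanSpace ℝ (Fin m) :=
  H.subtypeL.comp (H.orthogonalProjectionOnto)

/-- The rank-one operator `w ⊗ w : x ↦ ⟨w, x⟩ w`. -/
def rankOne {m : ℕ} (w : EuclideanSpace ℝ (Fin m)) :
    EuclideanSpace ℝ (Fin m) →L[ℝ] EuclideanSpace ℝ (Fin m) :=
  ((innerSL ℝ) w).smulRight w

/-- The smoothed projection
`C(H,v) = P_H − (1 − e^{−‖v_H‖²/(2δ²)}) (v_H/‖v_H‖) ⊗ (v_H/‖v_H‖)`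
(with `C(H,v) = P_H` when `v_H = P_H v = 0`). -/
def smoothedProj {m : ℕ} (δ : ℝ) (H : Submodule ℝ (EuclideanSpace ℝ (Fin m)))
    (v : EuclideanSpace ℝ (Fin m)) :
    EuclideanSpace ℝ (Fin m) →L[ℝ] EuclideanSpace ℝ (Fin m) :=
  letI := Classical.propDecidable
  if projCLM H v = 0 then projCLM H
  else projCLM H -
    (1 - Real.exp (-‖projCLM H v‖ ^ 2 / (2 * δ ^ 2))) •
      rankOne (‖projCLM H v‖⁻¹ • projCLM H v)

-- helper lemmas
lemma projCLM_mem {m : ℕ} (H : Submodule ℝ (EuclideanSpace ℝ (Fin m)))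
    (w : EuclideanSpace ℝ (Fin m)) : projCLM H w ∈ H :=
  (H.orthogonalProjectionOnto w).2

lemma projCLM_eq_self {m : ℕ} {H : Submodule ℝ (EuclideanSpace ℝ (Fin m))}
    {x : EuclideanSpace ℝ (Fin m)} (hx : x ∈ H) : projCLM H x = x :=
  (Submodule.starProjection_eq_self_iff (K := H)).mpr hx

lemma inner_projCLM_left {m : ℕ} {H : Submodule ℝ (EuclideanSpace ℝ (Fin m))}
    {x : EuclideanSpace ℝ (Fin m)} (hx : x ∈ H) (w : EuclideanSpace ℝ (Fin m)) :
    ⟪x, w⟫ = ⟪x, projCLM H w⟫ := by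
  have h0 : ⟪x, w - projCLM H w⟫ = 0 :=
    Submodule.inner_right_of_mem_orthogonal hx (Submodule.sub_starProjection_mem_orthogonal (K := H) w)
  rw [inner_sub_right] at h0
  linarith

lemma inner_projCLM_self {m : ℕ} (H : Submodule ℝ (EuclideanSpace ℝ (Fin m)))
    (w : EuclideanSpace ℝ (Fin m)) : ⟪projCLM H w, w⟫ = ‖projCLM H w‖ ^ 2 := by
  rw [inner_projCLM_left (projCLM_mem H w) w, real_inner_self_eq_norm_sq]

lemma rankOne_apply {m : ℕ} (w x : EuclideanSpace ℝ (Fin m)) :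
    rankOne w x = ⟪w, x⟫ • w := rfl

lemma trace_projCLM {m : ℕ} (H : Submodule ℝ (EuclideanSpace ℝ (Fin m))) :
    LinearMap.trace ℝ (EuclideanSpace ℝ (Fin m)) (projCLM H : _ →ₗ[ℝ] _) =
      (Module.finrank ℝ H : ℝ) := by
  have hp : LinearMap.IsProj H (projCLM H : EuclideanSpace ℝ (Fin m) →ₗ[ℝ] _) :=
    ⟨fun x => projCLM_mem H x, fun x hx => projCLM_eq_self hx⟩
  exact hp.trace

lemma trace_rankOne_unit {m : ℕ} (w : EuclideanSpace ℝ (Fin m)) (hw : ‖w‖ = 1) :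
    LinearMap.trace ℝ (EuclideanSpace ℝ (Fin m)) (rankOne w : _ →ₗ[ℝ] _) = 1 := by
  have hw0 : w ≠ 0 := by intro h; simp [h] at hw
  have hp : LinearMap.IsProj (ℝ ∙ w) (rankOne w : EuclideanSpace ℝ (Fin m) →ₗ[ℝ] _) := by
    constructor
    · intro x
      exact Submodule.smul_mem _ _ (Submodule.mem_span_singleton_self w)
    · intro x hx
      obtain ⟨a, rfl⟩ := Submodule.mem_span_singleton.mp hx
      have : ⟪w, w⟫ = 1 := by
        rw [real_inner_self_eq_norm_sq, hw]; norm_num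
      simp [rankOne_apply, real_inner_smul_right, this, smul_smul, hw]
  have := hp.trace
  rw [this, finrank_span_singleton hw0]
  norm_num

lemma exp_mul_le {δ t : ℝ} (hδ : 0 < δ) (ht : 0 < t) :
    Real.exp (-t ^ 2 / (2 * δ ^ 2)) * t ≤ δ := by
  have hexp0 : t ^ 2 / (2 * δ ^ 2) + 1 ≤ Real.exp (t ^ 2 / (2 * δ ^ 2)) :=
    Real.add_one_le_exp _
  have hepos : 0 < Real.exp (-t ^ 2 / (2 * δ ^ 2)) := Real.exp_pos _
  have heE : Real.exp (-t ^ 2 / (2 * δ ^ 2)) * Real.exp (t ^ 2 / (2 * δ ^ 2)) = 1 := by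
    rw [← Real.exp_add, neg_div, neg_add_cancel, Real.exp_zero]
  generalize hE : Real.exp (t ^ 2 / (2 * δ ^ 2)) = E at hexp0 heE
  generalize he : Real.exp (-t ^ 2 / (2 * δ ^ 2)) = e at hepos heE ⊢
  have hEpos : 0 < E := by rw [← hE]; exact Real.exp_pos _
  have h5 : t ^ 2 + 2 * δ ^ 2 ≤ 2 * δ ^ 2 * E := by
    have h6 := mul_le_mul_of_nonneg_left hexp0 (by positivity : (0:ℝ) ≤ 2 * δ ^ 2)
    have h7 : 2 * δ ^ 2 * (t ^ 2 / (2 * δ ^ 2) + 1) = t ^ 2 + 2 * δ ^ 2 := by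
      field_simp
    linarith
  have hδE : t ≤ δ * E := by nlinarith [sq_nonneg (t - δ), mul_pos hδ ht]
  calc e * t ≤ e * (δ * E) := mul_le_mul_of_nonneg_left hδE hepos.le
    _ = δ * (e * E) := by ring
    _ = δ := by rw [heE, mul_one]

/-- **Properties of the smoothed one-direction projection** (the construction of
Eldan–Koehler–Zeitouni, as used in Lemma `Cprops` / Appendix A of the paper):
`0 ⪯ C(H,v) ⪯ P_H`, its image lies in `H`, its trace is at least `dim H − 1`, and
`‖C(H,v)v‖ ≤ δ`. -/
theorem smoothedProj_properties (m : ℕ) (hm : 1 ≤ m) (δ : ℝ) (hδ : 0 < δ)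
    (H : Submodule ℝ (EuclideanSpace ℝ (Fin m))) (v : EuclideanSpace ℝ (Fin m)) :
    (∀ w, 0 ≤ ⟪smoothedProj δ H v w, w⟫) ∧
    (∀ w, ⟪smoothedProj δ H v w, w⟫ ≤ ⟪projCLM H w, w⟫) ∧
    (∀ w, smoothedProj δ H v w ∈ H) ∧
    ((Module.finrank ℝ H : ℝ) - 1 ≤
      LinearMap.trace ℝ (EuclideanSpace ℝ (Fin m)) (smoothedProj δ H v : _ →ₗ[ℝ] _)) ∧
    ‖smoothedProj δ H v v‖ ≤ δ := by
  classical
  by_cases hu : projCLM H v = 0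
  · have hC : smoothedProj δ H v = projCLM H := by rw [smoothedProj]; simp [hu]
    refine ⟨?_, ?_, ?_, ?_, ?_⟩
    · intro w; rw [hC, inner_projCLM_self]; positivity
    · intro w; rw [hC]
    · intro w; rw [hC]; exact projCLM_mem H w
    · rw [hC, trace_projCLM]; linarith
    · rw [hC, hu]; simpa using hδ.le
  · set u := projCLM H v with hu_def
    set t : ℝ := ‖u‖ with ht_def
    have ht : 0 < t := norm_pos_iff.mpr hu
    set c : ℝ := 1 - Real.exp (-t ^ 2 / (2 * δ ^ 2)) with hc_def
    set e : ℝ := Real.exp (-t ^ 2 / (2 * δ ^ 2)) with he_def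
    set uh : EuclideanSpace ℝ (Fin m) := t⁻¹ • u with huh_def
    have huh_norm : ‖uh‖ = 1 := by
      rw [huh_def, norm_smul, norm_inv, Real.norm_eq_abs, abs_of_pos ht]
      field_simp
      exact ht_def.symm
    have huh_mem : uh ∈ H := Submodule.smul_mem _ _ (projCLM_mem H v)
    have hepos : 0 < e := Real.exp_pos _
    have hele : e ≤ 1 := by
      rw [he_def]
      apply Real.exp_le_one_iff.mpr
      apply div_nonpos_of_nonpos_of_nonneg
      · nlinarith [sq_nonneg t]
      · positivity
    have hc0 : 0 ≤ c := by rw [hc_def]; linarith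
    have hc1 : c ≤ 1 := by rw [hc_def]; linarith
    have hC : smoothedProj δ H v = projCLM H - c • rankOne uh := by
      rw [smoothedProj, if_neg hu]
    have happly : ∀ w, smoothedProj δ H v w = projCLM H w - (c * ⟪uh, w⟫) • uh := by
      intro w
      rw [hC]
      simp [rankOne_apply, smul_smul]
    have hinner : ∀ w, ⟪smoothedProj δ H v w, w⟫ =
        ⟪projCLM H w, w⟫ - c * ⟪uh, w⟫ ^ 2 := by
      intro w
      rw [happly, inner_sub_left, real_inner_smul_left]
      ring
    have hcs : ∀ w, ⟪uh, w⟫ ^ 2 ≤ ‖projCLM H w‖ ^ 2 := by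
      intro w
      have h1 : ⟪uh, w⟫ = ⟪uh, projCLM H w⟫ := inner_projCLM_left huh_mem w
      have h2 := abs_real_inner_le_norm uh (projCLM H w)
      rw [huh_norm, one_mul] at h2
      calc ⟪uh, w⟫ ^ 2 = |⟪uh, projCLM H w⟫| ^ 2 := by rw [h1, sq_abs]
        _ ≤ ‖projCLM H w‖ ^ 2 := by nlinarith [abs_nonneg ⟪uh, projCLM H w⟫]
    refine ⟨?_, ?_, ?_, ?_, ?_⟩
    · intro w
      rw [hinner, inner_projCLM_self]
      nlinarith [hcs w, sq_nonneg ⟪uh, w⟫]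
    · intro w
      rw [hinner]
      nlinarith [sq_nonneg ⟪uh, w⟫]
    · intro w
      rw [happly]
      exact Submodule.sub_mem _ (projCLM_mem H w) (Submodule.smul_mem _ _ huh_mem)
    · rw [hC, ContinuousLinearMap.coe_sub, ContinuousLinearMap.coe_smul, map_sub, map_smul,
        trace_projCLM, trace_rankOne_unit uh huh_norm]
      simp only [smul_eq_mul, mul_one]
      linarith
    · have huv : ⟪uh, v⟫ = t := by
        rw [inner_projCLM_left huh_mem v, ← hu_def, huh_def, real_inner_smul_left,
          real_inner_self_eq_norm_sq, ← ht_def]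
        field_simp
      have hCv : smoothedProj δ H v v = e • u := by
        rw [happly, ← hu_def, huv, huh_def, smul_smul]
        have h1 : c * t * t⁻¹ = c := by field_simp
        rw [h1]
        simp only [hc_def, he_def]
        module
      rw [hCv, norm_smul, Real.norm_eq_abs, abs_of_pos hepos, ← ht_def]
      -- show e * t ≤ δ
      exact exp_mul_le hδ ht
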